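/- Let ℓ∞⁺ denote the set of bounded sequences s : ℕ → ℝ≥0 with norm ‖s‖ := sup_{i∈ℕ} s i, and let Γ : ℓ∞⁺ → ℓ∞⁺ be continuous (with respect to the sup-norm), monotone, subadditive, and homogeneous of degree one. Then the following are equivalent: (i) ‖Γⁿ(𝟙)‖ < 1 for some n ∈ ℕ (equivalently, the spectral radius r(Γ) = inf_{n≥1} ‖Γⁿ(𝟙)‖^{1/n} is less than 1); (ii) there exist M > 0 and a ∈ (0,1) with ‖Γᵏ(s)‖ ≤ M aᵏ ‖s‖ for all s ∈ ℓ∞⁺ and k ∈ ℕ (UGES); (iii) there exists a nonincreasing sequence b : ℕ → ℝ≥0 with b(k) → 0 such that ‖Γᵏ(s)‖ ≤ b(k)·‖s‖ for all s ∈ ℓ∞⁺ and k ∈ ℕ (UGAS); (iv) there exist λ ∈ (0,1) and s⁰ ∈ ℓ∞⁺ with inf_{i∈ℕ} s⁰_i > 0 such that Γ(s⁰) ≤ λ·s⁰ componentwise (point of strict decay). -/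

import Mathlib

open scoped NNReal
open Filter

/-- A nonnegative sequence belongs to `ℓ∞⁺` iff it is bounded. -/
def InLinf (s : ℕ → ℝ≥0) : Prop := BddAbove (Set.range s)

/-- The sup-norm `‖s‖ = ⨆ i, s i` on `ℓ∞⁺`. -/
noncomputable def lnorm (s : ℕ → ℝ≥0) : ℝ≥0 := ⨆ i, s i

/-- The constant sequence `𝟙`. -/
def oneSeq : ℕ → ℝ≥0 := fun _ => 1

/-- The sup-norm distance between two elements of `ℓ∞⁺`. -/
noncomputable def supDist (r s : ℕ → ℝ≥0) : ℝ := ⨆ i, |(r i : ℝ) - (s i : ℝ)|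

lemma linf_of_le {s : ℕ → ℝ≥0} {c : ℝ≥0} (h : ∀ i, s i ≤ c) : InLinf s :=
  ⟨c, by rintro x ⟨i, rfl⟩; exact h i⟩

lemma le_lnorm {s : ℕ → ℝ≥0} (hs : InLinf s) (i : ℕ) : s i ≤ lnorm s := le_ciSup hs i

lemma lnorm_le {s : ℕ → ℝ≥0} {c : ℝ≥0} (h : ∀ i, s i ≤ c) : lnorm s ≤ c := ciSup_le h

lemma linf_one : InLinf oneSeq := linf_of_le (fun _ => le_rfl)

lemma lnorm_one : lnorm oneSeq = 1 := by
  simpa [lnorm, oneSeq] using ciSup_const (α := ℝ≥0) (f := fun _ : ℕ => (1:ℝ≥0))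

lemma linf_smul {s : ℕ → ℝ≥0} (c : ℝ≥0) (hs : InLinf s) : InLinf (fun j => c * s j) :=
  linf_of_le (fun i => by
    exact mul_le_mul_right (le_lnorm hs i) c)

lemma linf_add {r s : ℕ → ℝ≥0} (hr : InLinf r) (hs : InLinf s) :
    InLinf (fun j => r j + s j) :=
  linf_of_le (c := lnorm r + lnorm s) (fun i => add_le_add (le_lnorm hr i) (le_lnorm hs i))

section Ops

variable (Γ : (ℕ → ℝ≥0) → ℕ → ℝ≥0)
  (hmap : ∀ s, InLinf s → InLinf (Γ s))
  (hmono : ∀ r s, InLinf r → InLinf s → (∀ i, r i ≤ s i) → ∀ i, Γ r i ≤ Γ s i)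
  (hsub : ∀ r s, InLinf r → InLinf s → ∀ i, Γ (fun j => r j + s j) i ≤ Γ r i + Γ s i)
  (hhom : ∀ (c : ℝ≥0) (s : ℕ → ℝ≥0), InLinf s → ∀ i, Γ (fun j => c * s j) i = c * Γ s i)

include hmap in
lemma iter_linf : ∀ (k : ℕ) (s : ℕ → ℝ≥0), InLinf s → InLinf (Γ^[k] s) := by
  intro k
  induction k with
  | zero => intro s hs; simpa using hs
  | succ k ih =>
    intro s hs
    rw [Function.iterate_succ_apply']
    exact hmap _ (ih s hs)

include hmap hmono in
lemma iter_mono : ∀ (k : ℕ) (r s : ℕ → ℝ≥0), InLinf r → InLinf s →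
    (∀ i, r i ≤ s i) → ∀ i, Γ^[k] r i ≤ Γ^[k] s i := by
  intro k
  induction k with
  | zero => intro r s _ _ h i; simpa using h i
  | succ k ih =>
    intro r s hr hs h i
    rw [Function.iterate_succ_apply', Function.iterate_succ_apply']
    exact hmono _ _ (iter_linf Γ hmap k r hr) (iter_linf Γ hmap k s hs) (ih r s hr hs h) i

include hmap hhom in
lemma iter_hom : ∀ (k : ℕ) (c : ℝ≥0) (s : ℕ → ℝ≥0), InLinf s →
    ∀ i, Γ^[k] (fun j => c * s j) i = c * Γ^[k] s i := by
  intro k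
  induction k with
  | zero => intro c s _ i; simp
  | succ k ih =>
    intro c s hs i
    rw [Function.iterate_succ_apply', Function.iterate_succ_apply']
    have : Γ^[k] (fun j => c * s j) = fun j => c * Γ^[k] s j := funext (ih c s hs)
    rw [this]
    exact hhom c _ (iter_linf Γ hmap k s hs) i

include hmap hmono hhom in
/-- Key bound: `Γᵏ s ≤ ‖s‖ · Γᵏ 𝟙` componentwise. -/
lemma iter_key : ∀ (k : ℕ) (s : ℕ → ℝ≥0), InLinf s →
    ∀ i, Γ^[k] s i ≤ lnorm s * Γ^[k] oneSeq i := by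
  intro k
  induction k with
  | zero => intro s hs i; simpa [oneSeq] using le_lnorm hs i
  | succ k ih =>
    intro s hs i
    rw [Function.iterate_succ_apply']
    calc Γ (Γ^[k] s) i
        ≤ Γ (fun j => lnorm s * Γ^[k] oneSeq j) i := by
          refine hmono _ _ (iter_linf Γ hmap k s hs)
            (linf_smul _ (iter_linf Γ hmap k oneSeq linf_one)) (ih s hs) i
      _ = lnorm s * Γ (Γ^[k] oneSeq) i := hhom _ _ (iter_linf Γ hmap k oneSeq linf_one) i
      _ = lnorm s * Γ^[k+1] oneSeq i := by rw [Function.iterate_succ_apply']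

include hmap hmono hhom in
lemma iter_norm_le (k : ℕ) (s : ℕ → ℝ≥0) (hs : InLinf s) :
    lnorm (Γ^[k] s) ≤ lnorm (Γ^[k] oneSeq) * lnorm s := by
  refine lnorm_le (fun i => ?_)
  calc Γ^[k] s i ≤ lnorm s * Γ^[k] oneSeq i := iter_key Γ hmap hmono hhom k s hs i
    _ ≤ lnorm s * lnorm (Γ^[k] oneSeq) :=
        mul_le_mul_right (le_lnorm (iter_linf Γ hmap k oneSeq linf_one) i) _
    _ = lnorm (Γ^[k] oneSeq) * lnorm s := mul_comm _ _

include hmap hmono hhom in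
lemma c_submul (m n : ℕ) :
    lnorm (Γ^[m + n] oneSeq) ≤ lnorm (Γ^[n] oneSeq) * lnorm (Γ^[m] oneSeq) := by
  refine lnorm_le (fun i => ?_)
  rw [Function.iterate_add_apply]
  calc Γ^[m] (Γ^[n] oneSeq) i ≤ lnorm (Γ^[n] oneSeq) * Γ^[m] oneSeq i :=
        iter_key Γ hmap hmono hhom m _ (iter_linf Γ hmap n oneSeq linf_one) i
    _ ≤ lnorm (Γ^[n] oneSeq) * lnorm (Γ^[m] oneSeq) :=
        mul_le_mul_right (le_lnorm (iter_linf Γ hmap m oneSeq linf_one) i) _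

include hmap hmono hhom in
lemma c_geom {n : ℕ} {a : ℝ≥0} (hc : lnorm (Γ^[n] oneSeq) ≤ a ^ n) :
    ∀ (q r : ℕ), lnorm (Γ^[n * q + r] oneSeq) ≤ (a ^ n) ^ q * lnorm (Γ^[r] oneSeq) := by
  intro q
  induction q with
  | zero => intro r; simp
  | succ q ih =>
    intro r
    have hk : n * (q + 1) + r = n + (n * q + r) := by ring
    rw [hk]
    calc lnorm (Γ^[n + (n * q + r)] oneSeq)
        ≤ lnorm (Γ^[n * q + r] oneSeq) * lnorm (Γ^[n] oneSeq) :=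
          c_submul Γ hmap hmono hhom n (n * q + r)
      _ ≤ ((a ^ n) ^ q * lnorm (Γ^[r] oneSeq)) * a ^ n :=
          mul_le_mul (ih r) hc zero_le zero_le
      _ = (a ^ n) ^ (q + 1) * lnorm (Γ^[r] oneSeq) := by ring

end Ops

set_option maxHeartbeats 1000000 in

/-- For a continuous, monotone, subadditive, homogeneous-of-degree-one operator
`Γ : ℓ∞⁺ → ℓ∞⁺`, the following are equivalent: (i) `‖Γⁿ(𝟙)‖ < 1` for some `n`
(the small-gain / spectral radius condition); (ii) UGES of the induced discrete-time system;
(iii) UGAS of the induced discrete-time system; (iv) existence of a point of strict decay. -/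
theorem small_gain_equivalences
    (Γ : (ℕ → ℝ≥0) → ℕ → ℝ≥0)
    (hmap : ∀ s, InLinf s → InLinf (Γ s))
    (hcont : ∀ s, InLinf s → ∀ ε : ℝ, 0 < ε → ∃ δ : ℝ, 0 < δ ∧
      ∀ r, InLinf r → supDist r s < δ → supDist (Γ r) (Γ s) < ε)
    (hmono : ∀ r s, InLinf r → InLinf s → (∀ i, r i ≤ s i) → ∀ i, Γ r i ≤ Γ s i)
    (hsub : ∀ r s, InLinf r → InLinf s → ∀ i, Γ (fun j => r j + s j) i ≤ Γ r i + Γ s i)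
    (hhom : ∀ (c : ℝ≥0) (s : ℕ → ℝ≥0), InLinf s → ∀ i, Γ (fun j => c * s j) i = c * Γ s i) :
    ((∃ n : ℕ, lnorm (Γ^[n] oneSeq) < 1) ↔
      (∃ M : ℝ≥0, 0 < M ∧ ∃ a : ℝ≥0, 0 < a ∧ a < 1 ∧
        ∀ s, InLinf s → ∀ k : ℕ, lnorm (Γ^[k] s) ≤ M * a ^ k * lnorm s)) ∧
    ((∃ M : ℝ≥0, 0 < M ∧ ∃ a : ℝ≥0, 0 < a ∧ a < 1 ∧
        ∀ s, InLinf s → ∀ k : ℕ, lnorm (Γ^[k] s) ≤ M * a ^ k * lnorm s) ↔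
      (∃ b : ℕ → ℝ≥0, Antitone b ∧ Tendsto b atTop (nhds 0) ∧
        ∀ s, InLinf s → ∀ k : ℕ, lnorm (Γ^[k] s) ≤ b k * lnorm s)) ∧
    ((∃ b : ℕ → ℝ≥0, Antitone b ∧ Tendsto b atTop (nhds 0) ∧
        ∀ s, InLinf s → ∀ k : ℕ, lnorm (Γ^[k] s) ≤ b k * lnorm s) ↔
      (∃ lam : ℝ≥0, 0 < lam ∧ lam < 1 ∧ ∃ s0 : ℕ → ℝ≥0, InLinf s0 ∧ (0 < ⨅ i, s0 i) ∧
        ∀ i, Γ s0 i ≤ lam * s0 i)) := by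
  set c : ℕ → ℝ≥0 := fun k => lnorm (Γ^[k] oneSeq) with hc
  have hc0 : c 0 = 1 := by simpa [c] using lnorm_one
  -- (i) → (ii)
  have h12 : (∃ n : ℕ, c n < 1) →
      (∃ M : ℝ≥0, 0 < M ∧ ∃ a : ℝ≥0, 0 < a ∧ a < 1 ∧
        ∀ s, InLinf s → ∀ k : ℕ, lnorm (Γ^[k] s) ≤ M * a ^ k * lnorm s) := by
    rintro ⟨n, hn⟩
    have hn0 : n ≠ 0 := by
      rintro rfl; rw [hc0] at hn; exact lt_irrefl _ hn
    set θ : ℝ≥0 := max (c n) 2⁻¹ with hθ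
    have hθ1 : θ < 1 := by
      apply max_lt hn
      rw [← NNReal.coe_lt_coe]; norm_num
    have hθpos : 0 < θ := lt_of_lt_of_le (by rw [← NNReal.coe_lt_coe]; norm_num) (le_max_right _ _)
    set a : ℝ≥0 := θ ^ ((n : ℝ)⁻¹) with ha
    have hapos : 0 < a := NNReal.rpow_pos hθpos
    have ha1 : a < 1 := NNReal.rpow_lt_one hθ1 (by positivity)
    have han : a ^ n = θ := by
      rw [ha, ← NNReal.rpow_natCast (θ ^ ((n:ℝ)⁻¹)) n, ← NNReal.rpow_mul,
        inv_mul_cancel₀ (by exact_mod_cast hn0), NNReal.rpow_one]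
    have hcn : c n ≤ a ^ n := by rw [han]; exact le_max_left _ _
    set C : ℝ≥0 := (Finset.range n).sup c + 1 with hC
    set M : ℝ≥0 := C * (a ^ n)⁻¹ + 1 with hM
    have hane : a ^ n ≠ 0 := (pow_pos hapos n).ne'
    refine ⟨M, by positivity, a, hapos, ha1, fun s hs k => ?_⟩
    have hck : c k ≤ M * a ^ k := by
      have hdm : n * (k / n) + k % n = k := Nat.div_add_mod k n
      have hr : k % n < n := Nat.mod_lt _ (Nat.pos_of_ne_zero hn0)
      have h1 : c k ≤ (a ^ n) ^ (k / n) * c (k % n) := by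
        have := c_geom Γ hmap hmono hhom hcn (k / n) (k % n)
        rw [hdm] at this; exact this
      have h2 : c (k % n) ≤ C := by
        rw [hC]
        exact le_trans (Finset.le_sup (Finset.mem_range.mpr hr)) (le_add_right le_rfl)
      have h3 : C ≤ M * a ^ (k % n) := by
        calc C = C * (a ^ n)⁻¹ * a ^ n := by
              rw [mul_assoc, inv_mul_cancel₀ hane, mul_one]
          _ ≤ C * (a ^ n)⁻¹ * a ^ (k % n) := by
              exact mul_le_mul_right (pow_le_pow_of_le_one zero_le ha1.le hr.le) _
          _ ≤ M * a ^ (k % n) := by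
              exact mul_le_mul_left (le_add_right le_rfl) _
      calc c k ≤ (a ^ n) ^ (k / n) * c (k % n) := h1
        _ ≤ (a ^ n) ^ (k / n) * (M * a ^ (k % n)) :=
            mul_le_mul_right (le_trans h2 h3) _
        _ = M * (a ^ (n * (k / n)) * a ^ (k % n)) := by rw [← pow_mul]; ring
        _ = M * a ^ k := by rw [← pow_add, hdm]
    calc lnorm (Γ^[k] s) ≤ c k * lnorm s := iter_norm_le Γ hmap hmono hhom k s hs
      _ ≤ M * a ^ k * lnorm s := mul_le_mul_left hck _
  -- (ii) → (iii)
  have h23 : (∃ M : ℝ≥0, 0 < M ∧ ∃ a : ℝ≥0, 0 < a ∧ a < 1 ∧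
        ∀ s, InLinf s → ∀ k : ℕ, lnorm (Γ^[k] s) ≤ M * a ^ k * lnorm s) →
      (∃ b : ℕ → ℝ≥0, Antitone b ∧ Tendsto b atTop (nhds 0) ∧
        ∀ s, InLinf s → ∀ k : ℕ, lnorm (Γ^[k] s) ≤ b k * lnorm s) := by
    rintro ⟨M, hM, a, hapos, ha1, h⟩
    refine ⟨fun k => M * a ^ k, ?_, ?_, fun s hs k => h s hs k⟩
    · intro m n hmn
      exact mul_le_mul_right (pow_le_pow_of_le_one zero_le ha1.le hmn) M
    · have := (NNReal.tendsto_pow_atTop_nhds_zero_of_lt_one ha1).const_mul M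
      simpa using this
  -- (iii) → (iv)
  have h34 : (∃ b : ℕ → ℝ≥0, Antitone b ∧ Tendsto b atTop (nhds 0) ∧
        ∀ s, InLinf s → ∀ k : ℕ, lnorm (Γ^[k] s) ≤ b k * lnorm s) →
      (∃ lam : ℝ≥0, 0 < lam ∧ lam < 1 ∧ ∃ s0 : ℕ → ℝ≥0, InLinf s0 ∧ (0 < ⨅ i, s0 i) ∧
        ∀ i, Γ s0 i ≤ lam * s0 i) := by
    rintro ⟨b, hbanti, hb0, hb⟩
    obtain ⟨m, hm⟩ : ∃ m, b m < 1 := by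
      have := (hb0.eventually (gt_mem_nhds (show (0:ℝ≥0) < 1 by norm_num))).exists
      exact this
    have hcm : c m < 1 := by
      have := hb oneSeq linf_one m
      rw [lnorm_one, mul_one] at this
      exact lt_of_le_of_lt this hm
    have hm0 : m ≠ 0 := by rintro rfl; rw [hc0] at hcm; exact lt_irrefl _ hcm
    set θ : ℝ≥0 := max (c m) 2⁻¹ with hθ
    have hθ1 : θ < 1 := max_lt hcm (by rw [← NNReal.coe_lt_coe]; norm_num)
    have hθpos : 0 < θ := lt_of_lt_of_le (by rw [← NNReal.coe_lt_coe]; norm_num) (le_max_right _ _)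
    set lam : ℝ≥0 := θ ^ ((m : ℝ)⁻¹) with hlam
    have hlpos : 0 < lam := NNReal.rpow_pos hθpos
    have hl1 : lam < 1 := NNReal.rpow_lt_one hθ1 (by positivity)
    have hlm : lam ^ m = θ := by
      rw [hlam, ← NNReal.rpow_natCast (θ ^ ((m:ℝ)⁻¹)) m, ← NNReal.rpow_mul,
        inv_mul_cancel₀ (by exact_mod_cast hm0), NNReal.rpow_one]
    -- s0 := ∑_{j< m} lam^{-j} Γ^[j] 𝟙
    set f : ℕ → ℕ → ℝ≥0 := fun j i => (lam ^ j)⁻¹ * Γ^[j] oneSeq i with hf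
    have hfL : ∀ j, InLinf (f j) := fun j =>
      linf_smul _ (iter_linf Γ hmap j oneSeq linf_one)
    set s0 : ℕ → ℝ≥0 := fun i => ∑ j ∈ Finset.range m, f j i with hs0
    have hs0L : InLinf s0 := by
      refine linf_of_le (c := ∑ j ∈ Finset.range m, lnorm (f j)) (fun i => ?_)
      exact Finset.sum_le_sum (fun j _ => le_lnorm (hfL j) i)
    have hs0ge : ∀ i, 1 ≤ s0 i := by
      intro i
      have : f 0 i = 1 := by simp [hf, oneSeq]
      calc (1:ℝ≥0) = f 0 i := this.symm
        _ ≤ s0 i := Finset.single_le_sum (f := fun j => f j i) (fun j _ => zero_le)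
              (Finset.mem_range.mpr (Nat.pos_of_ne_zero hm0))
    have hinf : 0 < ⨅ i, s0 i := by
      have : (1:ℝ≥0) ≤ ⨅ i, s0 i := le_ciInf hs0ge
      exact lt_of_lt_of_le one_pos this
    -- finite subadditivity over range
    have hzero : ∀ i, Γ (fun _ => (0:ℝ≥0)) i = 0 := by
      intro i
      have := hhom 0 oneSeq linf_one i
      simpa using this
    have hsum_sub : ∀ (F : Finset ℕ) (i : ℕ),
        Γ (fun i' => ∑ j ∈ F, f j i') i ≤ ∑ j ∈ F, Γ (f j) i := by
      intro F
      induction F using Finset.cons_induction with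
      | empty => intro i; simpa using (hzero i).le
      | cons j F hj ih =>
        intro i
        have hFL : InLinf (fun i' => ∑ j ∈ F, f j i') := by
          refine linf_of_le (c := ∑ j ∈ F, lnorm (f j)) (fun i' => ?_)
          exact Finset.sum_le_sum (fun j _ => le_lnorm (hfL j) i')
        calc Γ (fun i' => ∑ j' ∈ Finset.cons j F hj, f j' i') i
            = Γ (fun i' => f j i' + ∑ j' ∈ F, f j' i') i := by
              simp only [Finset.sum_cons]
          _ ≤ Γ (f j) i + Γ (fun i' => ∑ j' ∈ F, f j' i') i := hsub _ _ (hfL j) hFL i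
          _ ≤ Γ (f j) i + ∑ j' ∈ F, Γ (f j') i := add_le_add_right (ih i) _
          _ = ∑ j' ∈ Finset.cons j F hj, Γ (f j') i := by rw [Finset.sum_cons]
    refine ⟨lam, hlpos, hl1, s0, hs0L, hinf, fun i => ?_⟩
    -- g j = lam * (lam^j)⁻¹ * Γ^[j]𝟙 i
    set g : ℕ → ℝ≥0 := fun j => lam * (lam ^ j)⁻¹ * Γ^[j] oneSeq i with hg
    have hΓf : ∀ j, Γ (f j) i = g (j + 1) := by
      intro j
      show Γ (f j) i = lam * (lam ^ (j + 1))⁻¹ * Γ^[j + 1] oneSeq i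
      have h1 : Γ (f j) i = (lam ^ j)⁻¹ * Γ (Γ^[j] oneSeq) i :=
        hhom _ _ (iter_linf Γ hmap j oneSeq linf_one) i
      rw [h1, Function.iterate_succ_apply']
      congr 1
      rw [pow_succ, mul_inv]
      rw [mul_comm (lam ^ j)⁻¹ lam⁻¹, ← mul_assoc, mul_inv_cancel₀ hlpos.ne', one_mul]
    have hstep : Γ s0 i ≤ ∑ j ∈ Finset.range m, g (j + 1) := by
      calc Γ s0 i ≤ ∑ j ∈ Finset.range m, Γ (f j) i := hsum_sub (Finset.range m) i
        _ = ∑ j ∈ Finset.range m, g (j + 1) := Finset.sum_congr rfl (fun j _ => hΓf j)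
    have hg0 : g 0 = lam := by simp [hg, oneSeq]
    have hgm : g m ≤ g 0 := by
      rw [hg0, hg]
      have h1 : Γ^[m] oneSeq i ≤ lam ^ m := by
        rw [hlm]
        exact le_trans (le_lnorm (iter_linf Γ hmap m oneSeq linf_one) i) (le_max_left _ _)
      calc lam * (lam ^ m)⁻¹ * Γ^[m] oneSeq i ≤ lam * (lam ^ m)⁻¹ * lam ^ m :=
            mul_le_mul_right h1 _
        _ = lam := by rw [mul_assoc, inv_mul_cancel₀ (pow_pos hlpos m).ne', mul_one]
    have hshift : ∑ j ∈ Finset.range m, g (j + 1) ≤ ∑ j ∈ Finset.range m, g j := by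
      have e1 : ∑ j ∈ Finset.range (m + 1), g j
          = (∑ j ∈ Finset.range m, g (j + 1)) + g 0 := Finset.sum_range_succ' g m
      have e2 : ∑ j ∈ Finset.range (m + 1), g j
          = (∑ j ∈ Finset.range m, g j) + g m := Finset.sum_range_succ g m
      have : (∑ j ∈ Finset.range m, g (j + 1)) + g 0
          ≤ (∑ j ∈ Finset.range m, g j) + g 0 := by
        rw [← e1, e2]
        exact add_le_add_right hgm _
      exact le_of_add_le_add_right this
    have hfinal : ∑ j ∈ Finset.range m, g j = lam * s0 i := by
      rw [hs0, Finset.mul_sum]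
      refine Finset.sum_congr rfl (fun j _ => ?_)
      show lam * (lam ^ j)⁻¹ * Γ^[j] oneSeq i = lam * ((lam ^ j)⁻¹ * Γ^[j] oneSeq i)
      rw [mul_assoc]
    exact le_trans hstep (le_trans hshift hfinal.le)
  -- (iv) → (i)
  have h41 : (∃ lam : ℝ≥0, 0 < lam ∧ lam < 1 ∧ ∃ s0 : ℕ → ℝ≥0, InLinf s0 ∧ (0 < ⨅ i, s0 i) ∧
        ∀ i, Γ s0 i ≤ lam * s0 i) → (∃ n : ℕ, c n < 1) := by
    rintro ⟨lam, hlpos, hl1, s0, hs0L, hinf, hdec⟩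
    set ε : ℝ≥0 := ⨅ i, s0 i with hε
    have hεle : ∀ i, ε ≤ s0 i := fun i => ciInf_le (OrderBot.bddBelow _) i
    have hεne : ε ≠ 0 := hinf.ne'
    -- Γ^[n] s0 ≤ lam^n s0
    have hiter : ∀ n i, Γ^[n] s0 i ≤ lam ^ n * s0 i := by
      intro n
      induction n with
      | zero => intro i; simp
      | succ n ih =>
        intro i
        rw [Function.iterate_succ_apply']
        calc Γ (Γ^[n] s0) i ≤ Γ (fun j => lam ^ n * s0 j) i :=
              hmono _ _ (iter_linf Γ hmap n s0 hs0L) (linf_smul _ hs0L) ih i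
          _ = lam ^ n * Γ s0 i := hhom _ _ hs0L i
          _ ≤ lam ^ n * (lam * s0 i) := mul_le_mul_right (hdec i) _
          _ = lam ^ (n + 1) * s0 i := by ring
    have hone : ∀ i, oneSeq i ≤ ε⁻¹ * s0 i := by
      intro i
      have : ε * 1 ≤ s0 i := by simpa using hεle i
      rw [oneSeq]
      rw [← inv_mul_cancel₀ hεne]
      exact mul_le_mul_right (hεle i) _
    have hbound : ∀ n, c n ≤ ε⁻¹ * lnorm s0 * lam ^ n := by
      intro n
      refine lnorm_le (fun i => ?_)
      calc Γ^[n] oneSeq i ≤ Γ^[n] (fun j => ε⁻¹ * s0 j) i :=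
            iter_mono Γ hmap hmono n _ _ linf_one (linf_smul _ hs0L) hone i
        _ = ε⁻¹ * Γ^[n] s0 i := iter_hom Γ hmap hhom n _ _ hs0L i
        _ ≤ ε⁻¹ * (lam ^ n * s0 i) := mul_le_mul_right (hiter n i) _
        _ ≤ ε⁻¹ * (lam ^ n * lnorm s0) := by
            exact mul_le_mul_right (mul_le_mul_right (le_lnorm hs0L i) _) _
        _ = ε⁻¹ * lnorm s0 * lam ^ n := by ring
    have htend : Tendsto (fun n => ε⁻¹ * lnorm s0 * lam ^ n) atTop (nhds 0) := by
      have := (NNReal.tendsto_pow_atTop_nhds_zero_of_lt_one hl1).const_mul (ε⁻¹ * lnorm s0)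
      simpa using this
    obtain ⟨n, hn⟩ := (htend.eventually (gt_mem_nhds (show (0:ℝ≥0) < 1 by norm_num))).exists
    exact ⟨n, lt_of_le_of_lt (hbound n) hn⟩
  refine ⟨⟨h12, fun h => h41 (h34 (h23 h))⟩,
    ⟨h23, fun h => h12 (h41 (h34 h))⟩,
    ⟨h34, fun h => h23 (h12 (h41 h))⟩⟩
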